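/- The subspaces 𝔪(1,0,0) = {h(0,v,0,0)}, 𝔪(0,0,2) = {h(0,0,0,y) : y ∈ ℝ²} of 𝔪 ⊂ gl(7,ℝ) satisfy: [𝔪,𝔪] ⊆ 𝔪(1,0,0) ⊕ 𝔪(0,0,2), [𝔪, 𝔪(1,0,0) ⊕ 𝔪(0,0,2)] ⊆ 𝔪(0,0,2), and [𝔪, 𝔪(0,0,2)] = 0, where brackets are matrix commutators and 𝔪 = {h(0,v,u,y) : v ∈ ℝ, u,y ∈ ℝ²}. -/

import Mathlib

noncomputable section

open Real

/-- The matrix `h(A,v,u,y)` from the paper (0-indexed entries of `A`, `u`, `y`). -/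
def hMat (A : Matrix (Fin 2) (Fin 2) ℝ) (v : ℝ) (u y : Fin 2 → ℝ) :
    Matrix (Fin 7) (Fin 7) ℝ :=
  !![A.trace, -u 1, u 0, Real.sqrt 2 * v, 0, -y 0, -y 1;
     0, A 0 0, A 0 1, Real.sqrt 2 * u 0, y 0, 0, v;
     0, A 1 0, A 1 1, Real.sqrt 2 * u 1, y 1, -v, 0;
     0, 0, 0, 0, Real.sqrt 2 * v, Real.sqrt 2 * u 0, Real.sqrt 2 * u 1;
     0, 0, 0, 0, -A.trace, 0, 0;
     0, 0, 0, 0, u 1, -A 0 0, -A 1 0;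
     0, 0, 0, 0, -u 0, -A 0 1, -A 1 1]

def mSet : Set (Matrix (Fin 7) (Fin 7) ℝ) :=
  {M | ∃ (v : ℝ) (u y : Fin 2 → ℝ), M = hMat 0 v u y}

section entries
variable (A : Matrix (Fin 2) (Fin 2) ℝ) (v : ℝ) (u y : Fin 2 → ℝ)
@[simp] lemma hMat_00 : hMat A v u y 0 0 = A.trace := rfl
@[simp] lemma hMat_01 : hMat A v u y 0 1 = -u 1 := rfl
@[simp] lemma hMat_02 : hMat A v u y 0 2 = u 0 := rfl
@[simp] lemma hMat_03 : hMat A v u y 0 3 = Real.sqrt 2 * v := rfl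
@[simp] lemma hMat_04 : hMat A v u y 0 4 = 0 := rfl
@[simp] lemma hMat_05 : hMat A v u y 0 5 = -y 0 := rfl
@[simp] lemma hMat_06 : hMat A v u y 0 6 = -y 1 := rfl
@[simp] lemma hMat_10 : hMat A v u y 1 0 = 0 := rfl
@[simp] lemma hMat_11 : hMat A v u y 1 1 = A 0 0 := rfl
@[simp] lemma hMat_12 : hMat A v u y 1 2 = A 0 1 := rfl
@[simp] lemma hMat_13 : hMat A v u y 1 3 = Real.sqrt 2 * u 0 := rfl
@[simp] lemma hMat_14 : hMat A v u y 1 4 = y 0 := rfl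
@[simp] lemma hMat_15 : hMat A v u y 1 5 = 0 := rfl
@[simp] lemma hMat_16 : hMat A v u y 1 6 = v := rfl
@[simp] lemma hMat_20 : hMat A v u y 2 0 = 0 := rfl
@[simp] lemma hMat_21 : hMat A v u y 2 1 = A 1 0 := rfl
@[simp] lemma hMat_22 : hMat A v u y 2 2 = A 1 1 := rfl
@[simp] lemma hMat_23 : hMat A v u y 2 3 = Real.sqrt 2 * u 1 := rfl
@[simp] lemma hMat_24 : hMat A v u y 2 4 = y 1 := rfl
@[simp] lemma hMat_25 : hMat A v u y 2 5 = -v := rfl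
@[simp] lemma hMat_26 : hMat A v u y 2 6 = 0 := rfl
@[simp] lemma hMat_30 : hMat A v u y 3 0 = 0 := rfl
@[simp] lemma hMat_31 : hMat A v u y 3 1 = 0 := rfl
@[simp] lemma hMat_32 : hMat A v u y 3 2 = 0 := rfl
@[simp] lemma hMat_33 : hMat A v u y 3 3 = 0 := rfl
@[simp] lemma hMat_34 : hMat A v u y 3 4 = Real.sqrt 2 * v := rfl
@[simp] lemma hMat_35 : hMat A v u y 3 5 = Real.sqrt 2 * u 0 := rfl
@[simp] lemma hMat_36 : hMat A v u y 3 6 = Real.sqrt 2 * u 1 := rfl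
@[simp] lemma hMat_40 : hMat A v u y 4 0 = 0 := rfl
@[simp] lemma hMat_41 : hMat A v u y 4 1 = 0 := rfl
@[simp] lemma hMat_42 : hMat A v u y 4 2 = 0 := rfl
@[simp] lemma hMat_43 : hMat A v u y 4 3 = 0 := rfl
@[simp] lemma hMat_44 : hMat A v u y 4 4 = -A.trace := rfl
@[simp] lemma hMat_45 : hMat A v u y 4 5 = 0 := rfl
@[simp] lemma hMat_46 : hMat A v u y 4 6 = 0 := rfl
@[simp] lemma hMat_50 : hMat A v u y 5 0 = 0 := rfl
@[simp] lemma hMat_51 : hMat A v u y 5 1 = 0 := rfl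
@[simp] lemma hMat_52 : hMat A v u y 5 2 = 0 := rfl
@[simp] lemma hMat_53 : hMat A v u y 5 3 = 0 := rfl
@[simp] lemma hMat_54 : hMat A v u y 5 4 = u 1 := rfl
@[simp] lemma hMat_55 : hMat A v u y 5 5 = -A 0 0 := rfl
@[simp] lemma hMat_56 : hMat A v u y 5 6 = -A 1 0 := rfl
@[simp] lemma hMat_60 : hMat A v u y 6 0 = 0 := rfl
@[simp] lemma hMat_61 : hMat A v u y 6 1 = 0 := rfl
@[simp] lemma hMat_62 : hMat A v u y 6 2 = 0 := rfl
@[simp] lemma hMat_63 : hMat A v u y 6 3 = 0 := rfl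
@[simp] lemma hMat_64 : hMat A v u y 6 4 = -u 0 := rfl
@[simp] lemma hMat_65 : hMat A v u y 6 5 = -A 0 1 := rfl
@[simp] lemma hMat_66 : hMat A v u y 6 6 = -A 1 1 := rfl
end entries

set_option maxHeartbeats 1000000 in
/-- The commutator of two elements of 𝔪, computed explicitly. -/
lemma hMat_comm (v w : ℝ) (u y p z : Fin 2 → ℝ) :
    hMat 0 v u y * hMat 0 w p z - hMat 0 w p z * hMat 0 v u y
      = hMat 0 (2 * (u 0 * p 1 - u 1 * p 0)) 0
          ![3 * (u 0 * w - p 0 * v), 3 * (u 1 * w - p 1 * v)] := by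
  have h2 : Real.sqrt 2 ^ 2 = 2 := Real.sq_sqrt (by norm_num)
  ext i j
  fin_cases i <;> fin_cases j <;>
    simp [Matrix.mul_apply, Fin.sum_univ_seven, Matrix.sub_apply] <;>
    (try ring) <;> (simp only [h2]; try ring)

@[simp] lemma hMat_zero : hMat 0 0 0 ![0, 0] = 0 := by
  ext i j
  fin_cases i <;> fin_cases j <;> simp

/-- Lower central series of 𝔪: [𝔪,𝔪] ⊆ 𝔪(1,0,0) ⊕ 𝔪(0,0,2),
[𝔪, 𝔪(1,0,0) ⊕ 𝔪(0,0,2)] ⊆ 𝔪(0,0,2), and [𝔪, 𝔪(0,0,2)] = 0. -/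
theorem m_lower_central_series :
    (∀ X ∈ mSet, ∀ Y ∈ mSet, ∃ (v : ℝ) (y : Fin 2 → ℝ),
      X * Y - Y * X = hMat 0 v 0 y) ∧
    (∀ X ∈ mSet, ∀ (v : ℝ) (y : Fin 2 → ℝ), ∃ y' : Fin 2 → ℝ,
      X * hMat 0 v 0 y - hMat 0 v 0 y * X = hMat 0 0 0 y') ∧
    (∀ X ∈ mSet, ∀ y : Fin 2 → ℝ,
      X * hMat 0 0 0 y - hMat 0 0 0 y * X = 0) := by
  refine ⟨?_, ?_, ?_⟩
  · rintro X ⟨v, u, y, rfl⟩ Y ⟨w, p, z, rfl⟩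
    exact ⟨2 * (u 0 * p 1 - u 1 * p 0),
      ![3 * (u 0 * w - p 0 * v), 3 * (u 1 * w - p 1 * v)], hMat_comm v w u y p z⟩
  · rintro X ⟨v, u, y, rfl⟩ w z
    exact ⟨![3 * (u 0 * w), 3 * (u 1 * w)], by simpa using hMat_comm v w u y 0 z⟩
  · rintro X ⟨v, u, y, rfl⟩ z
    simpa using hMat_comm v 0 u y 0 z
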